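/- arXiv:1211.2763 — 3 statements merged into one kernel-verified Lean document; each statement's English description precedes it below -/
import Mathlib

section
/- Under the quantile design with Hölder-continuous density ψ (exponent α ∈ (0,1]) bounded below by a positive constant, for each fixed i_max, uniformly over k and 1 ≤ i ≤ i_max one has t_{k+i} - t_k = (i δ_n)/(T ψ(t_k)) · (1 + O(δ_n^α)); more precisely, |t_{k+i} - t_k - (i δ_n)/(T ψ(t_k))| ≤ (i δ_n)/(T ψ(t_k)) · L · (C₂ i_max δ_n)^α / inf ψ, where C₂ = (T inf ψ)^{-1}. -/
open MeasureTheory Set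

/-- First-order expansion of the quantile-design spacings: with a Hölder
density `ψ` bounded below, uniformly over `k` and `1 ≤ i ≤ i_max`,
`|t (k+i) - t k - i δ_n/(T ψ(t k))| ≤ (i δ_n/(T ψ(t k))) · L (C₂ i_max δ_n)^α / inf ψ`
where `C₂ = (T inf ψ)⁻¹`. -/
theorem stmt_4 (T : ℝ) (hT : 0 < T) (ψ : ℝ → ℝ)
    (hcont : ContinuousOn ψ (Set.Icc 0 T))
    (hinf : 0 < sInf (ψ '' Set.Icc 0 T))
    (L α : ℝ) (hL : 0 ≤ L) (hα : α ∈ Set.Ioc (0 : ℝ) 1)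
    (hHolder : ∀ s ∈ Set.Icc (0 : ℝ) T, ∀ u ∈ Set.Icc (0 : ℝ) T,
      |ψ s - ψ u| ≤ L * |s - u| ^ α)
    (n : ℕ) (δn : ℝ) (hδ : 0 < δn) (hnδ : (n : ℝ) * δn ≤ T)
    (t : ℕ → ℝ) (ht0 : t 0 = 0)
    (htmem : ∀ k ≤ n, t k ∈ Set.Icc (0 : ℝ) T)
    (hquant : ∀ k ≤ n, ∫ s in (0 : ℝ)..(t k), ψ s = k * δn / T)
    (imax : ℕ) (himax : 1 ≤ imax) :
    ∀ k i : ℕ, 1 ≤ i → i ≤ imax → k + i ≤ n →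
      |t (k + i) - t k - (i * δn) / (T * ψ (t k))| ≤
        (i * δn) / (T * ψ (t k)) *
          (L * ((T * sInf (ψ '' Set.Icc 0 T))⁻¹ * imax * δn) ^ α /
            sInf (ψ '' Set.Icc 0 T)) := by
  intro k i hi1 hii hkin
  set m := sInf (ψ '' Set.Icc 0 T) with hm
  have hk : k ≤ n := le_trans (Nat.le_add_right k i) hkin
  have hka : t k ∈ Icc (0:ℝ) T := htmem k hk
  have hkb : t (k+i) ∈ Icc (0:ℝ) T := htmem (k+i) hkin
  have hbdd : BddBelow (ψ '' Icc (0:ℝ) T) :=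
    (isCompact_Icc.image_of_continuousOn hcont).bddBelow
  have hmle : ∀ x ∈ Icc (0:ℝ) T, m ≤ ψ x := fun x hx => csInf_le hbdd ⟨x, hx, rfl⟩
  have hψa : 0 < ψ (t k) := lt_of_lt_of_le hinf (hmle _ hka)
  have hint : ∀ a ∈ Icc (0:ℝ) T, ∀ b ∈ Icc (0:ℝ) T, IntervalIntegrable ψ volume a b := by
    intro a ha b hb
    exact (hcont.mono (Set.uIcc_subset_Icc ha hb)).intervalIntegrable
  have h0T : (0:ℝ) ∈ Icc (0:ℝ) T := ⟨le_refl 0, hT.le⟩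
  have hadd := intervalIntegral.integral_add_adjacent_intervals
    (hint 0 h0T (t k) hka) (hint (t k) hka (t (k+i)) hkb)
  have hI : ∫ s in (t k)..(t (k+i)), ψ s = i * δn / T := by
    have h1 := hquant k hk
    have h2 := hquant (k+i) hkin
    rw [h1, h2] at hadd
    push_cast at hadd ⊢
    have hr : ((k:ℝ) + i) * δn / T = (k:ℝ) * δn / T + (i:ℝ) * δn / T := by ring
    linarith [hadd, hr]
  have hlow : ∀ a ∈ Icc (0:ℝ) T, ∀ b ∈ Icc (0:ℝ) T, a ≤ b →
      m * (b - a) ≤ ∫ s in a..b, ψ s := by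
    intro a ha b hb hab
    have := intervalIntegral.integral_mono_on hab intervalIntegrable_const
      (hint a ha b hb) (fun x hx => hmle x (Icc_subset_Icc ha.1 hb.2 hx))
    simpa [mul_comm] using this
  have hab : t k ≤ t (k+i) := by
    by_contra h
    push_neg at h
    have h1 := hlow _ hkb _ hka h.le
    rw [intervalIntegral.integral_symm (t k) (t (k+i)), hI] at h1
    have hpos : 0 < (i : ℝ) * δn / T := by positivity
    have hmp := mul_pos hinf (sub_pos.mpr h)
    linarith
  set Δ := t (k+i) - t k with hΔ
  have hΔ0 : 0 ≤ Δ := by simp [hΔ, hab]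
  have hmΔ : m * Δ ≤ (i:ℝ) * δn / T := by
    have := hlow _ hka _ hkb hab
    rw [hI] at this
    exact this
  have hΔle : Δ ≤ (i:ℝ) * δn / (T * m) := by
    rw [← div_div, le_div_iff₀ hinf]
    linarith [hmΔ]
  set X := (T * m)⁻¹ * (imax:ℝ) * δn with hX
  have hΔX : Δ ≤ X := by
    have : (i:ℝ) ≤ (imax:ℝ) := Nat.cast_le.mpr hii
    calc Δ ≤ (i:ℝ) * δn / (T * m) := hΔle
      _ ≤ (imax:ℝ) * δn / (T * m) := by
            gcongr
      _ = X := by rw [hX]; ring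
  have hmain : |∫ s in (t k)..(t (k+i)), (ψ s - ψ (t k))| ≤ L * Δ ^ α * Δ := by
    have hbnd : ∀ x ∈ Set.uIoc (t k) (t (k+i)), ‖ψ x - ψ (t k)‖ ≤ L * Δ ^ α := by
      intro x hx
      rw [Set.uIoc_of_le hab] at hx
      have hxT : x ∈ Icc (0:ℝ) T := ⟨le_trans hka.1 hx.1.le, le_trans hx.2 hkb.2⟩
      have h1 := hHolder x hxT (t k) hka
      have h2 : |x - t k| ≤ Δ := by
        rw [abs_of_nonneg (by linarith [hx.1.le])]
        simp only [hΔ]; linarith [hx.2]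
      have h3 : |x - t k| ^ α ≤ Δ ^ α :=
        Real.rpow_le_rpow (abs_nonneg _) h2 hα.1.le
      calc ‖ψ x - ψ (t k)‖ = |ψ x - ψ (t k)| := rfl
        _ ≤ L * |x - t k| ^ α := h1
        _ ≤ L * Δ ^ α := mul_le_mul_of_nonneg_left h3 hL
    have := intervalIntegral.norm_integral_le_of_norm_le_const hbnd
    rw [abs_of_nonneg hΔ0] at this
    exact this
  have hsplit : ∫ s in (t k)..(t (k+i)), (ψ s - ψ (t k)) = (i:ℝ) * δn / T - Δ * ψ (t k) := by
    rw [intervalIntegral.integral_sub (hint _ hka _ hkb) intervalIntegrable_const,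
      hI, intervalIntegral.integral_const]
    simp [hΔ, smul_eq_mul]
  rw [hsplit] at hmain
  have hkey : |Δ - (i:ℝ) * δn / (T * ψ (t k))| ≤ L * Δ ^ α * Δ / ψ (t k) := by
    have heq : Δ - (i:ℝ) * δn / (T * ψ (t k)) =
        (Δ * ψ (t k) - (i:ℝ) * δn / T) / ψ (t k) := by
      field_simp
    rw [heq, abs_div, abs_of_pos hψa]
    exact (div_le_div_iff_of_pos_right hψa).mpr (by rw [abs_sub_comm]; exact hmain)
  refine le_trans hkey ?_
  have hXα : Δ ^ α ≤ X ^ α := Real.rpow_le_rpow hΔ0 hΔX hα.1.le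
  have hΔα0 : 0 ≤ Δ ^ α := Real.rpow_nonneg hΔ0 α
  have hXα0 : 0 ≤ X ^ α := Real.rpow_nonneg (le_trans hΔ0 hΔX) α
  have h1 : L * Δ ^ α * Δ ≤ L * X ^ α * ((i:ℝ) * δn / (T * m)) := by
    exact mul_le_mul (mul_le_mul_of_nonneg_left hXα hL) hΔle hΔ0
      (mul_nonneg hL hXα0)
  have h2 : L * Δ ^ α * Δ / ψ (t k) ≤ L * X ^ α * ((i:ℝ) * δn / (T * m)) / ψ (t k) :=
    (div_le_div_iff_of_pos_right hψa).mpr h1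
  refine le_trans h2 (le_of_eq ?_)
  have hm0 : m ≠ 0 := ne_of_gt hinf
  have hT0 : T ≠ 0 := ne_of_gt hT
  have hψ0 : ψ (t k) ≠ 0 := ne_of_gt hψa
  rw [hX]
  field_simp
end

section
/- Let μ be (r₀+1)-times continuously differentiable on [0,T], and let the design points satisfy C₁ j δ_n ≤ t_{k+j} − t_k ≤ C₂ j δ_n for constants 0 < C₁ ≤ C₂. Then for r ≥ r₀+1 and r* = r₀+1, |∑_{i=0}^{r} b_{ikr}^{(u)} μ(t_{k+iu})| ≤ K · δ_n^{−(r − r*)} for a constant K depending only on r, u, C₁, C₂, T and sup|μ^{(r*)}|; in particular the divided difference of μ of order r = r₀+1 is uniformly bounded in n and k. -/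
open Finset Set Polynomial Nat
set_option maxHeartbeats 1000000

lemma coeff_top_interpolate {N : ℕ} (v : Fin (N+1) → ℝ)
    (hv : Set.InjOn v (Finset.univ : Finset (Fin (N+1)))) (f : Fin (N+1) → ℝ) :
    (Lagrange.interpolate Finset.univ v f).coeff N =
      ∑ i, f i * (∏ m ∈ Finset.univ.erase i, (v i - v m))⁻¹ := by
  rw [Lagrange.interpolate_apply, Polynomial.finset_sum_coeff]
  refine Finset.sum_congr rfl fun i _ => ?_
  rw [Polynomial.coeff_C_mul]
  congr 1
  have hd : (Lagrange.basis Finset.univ v i).natDegree = N := by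
    rw [Lagrange.natDegree_basis hv (Finset.mem_univ i)]; simp
  have h2 : (Lagrange.basis Finset.univ v i).coeff N = (Lagrange.basis Finset.univ v i).leadingCoeff := by
    rw [Polynomial.leadingCoeff, hd]
  rw [h2, Lagrange.basis, Polynomial.leadingCoeff_prod, ← Finset.prod_inv_distrib]
  refine Finset.prod_congr rfl fun m hm => ?_
  rw [Lagrange.basisDivisor, Polynomial.leadingCoeff_mul, Polynomial.leadingCoeff_C,
    (Polynomial.monic_X_sub_C (v m)).leadingCoeff, mul_one]

lemma iterDeriv_sub {T : ℝ} {μ : ℝ → ℝ} {N : ℕ} (hT : 0 < T)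
    (hμ : ContDiffOn ℝ (N:ℕ∞) μ (Set.Icc 0 T)) {a b : ℝ} (hab : a < b)
    (hsub : Set.Icc a b ⊆ Set.Icc 0 T) {m : ℕ} (hm : m ≤ N) {x : ℝ} (hx : x ∈ Set.Icc a b) :
    iteratedDerivWithin m μ (Set.Icc a b) x = iteratedDerivWithin m μ (Set.Icc 0 T) x := by
  have H := (hμ.ftaylorSeriesWithin (uniqueDiffOn_Icc hT)).mono hsub
  have h := H.eq_iteratedFDerivWithin_of_uniqueDiffOn (by exact_mod_cast hm)
    (uniqueDiffOn_Icc hab) hx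
  rw [iteratedDerivWithin_eq_iteratedFDerivWithin, iteratedDerivWithin_eq_iteratedFDerivWithin,
    ← h]
  rfl

/-- Uniform bound for divided differences of a smooth mean function: if
`μ ∈ C^{r₀+1}([0,T])` and the design satisfies `C₁ j δ ≤ t(k+j) − t(k) ≤ C₂ j δ`,
then for `r ≥ r₀ + 1` the divided difference of order `r` of `μ` is bounded by
`K δ^{−(r − (r₀+1))}` for a constant `K` not depending on `n`, `δ`, `t`, `k`. -/
theorem stmt_14 (T : ℝ) (hT : 0 < T) (r₀ r u : ℕ) (hu : 1 ≤ u) (hr : r₀ + 1 ≤ r)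
    (C₁ C₂ : ℝ) (hC₁ : 0 < C₁) (hC₁₂ : C₁ ≤ C₂)
    (μ : ℝ → ℝ) (hμ : ContDiffOn ℝ ((r₀ + 1 : ℕ) : ℕ∞) μ (Set.Icc 0 T)) :
    ∃ K : ℝ, 0 < K ∧
      ∀ (n : ℕ) (δ : ℝ), 0 < δ →
        ∀ t : ℕ → ℝ,
          (∀ j ≤ n, t j ∈ Set.Icc (0 : ℝ) T) →
          (∀ k j : ℕ, k + j ≤ n → C₁ * j * δ ≤ t (k + j) - t k ∧ t (k + j) - t k ≤ C₂ * j * δ) →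
          ∀ k : ℕ, k + r * u ≤ n →
            |∑ i : Fin (r + 1),
                μ (t (k + i.val * u)) /
                  ∏ m ∈ Finset.univ.erase i, (t (k + i.val * u) - t (k + m.val * u))| ≤
              K / δ ^ (r - (r₀ + 1)) := by
  -- global bound on the top derivative
  obtain ⟨M0, hM0⟩ := (isCompact_Icc (a := (0:ℝ)) (b := T)).exists_bound_of_continuousOn
    (hμ.continuousOn_iteratedDerivWithin le_rfl (uniqueDiffOn_Icc hT))
  have hM0nn : 0 ≤ M0 := le_trans (norm_nonneg _) (hM0 0 (by constructor <;> [rfl; exact hT.le]))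
  have hCu : (0:ℝ) < C₁ * u := by
    have : (1:ℝ) ≤ u := by exact_mod_cast hu
    positivity
  have hC₂pos : 0 < C₂ := lt_of_lt_of_le hC₁ hC₁₂
  have hrupos : (0:ℝ) < (r:ℝ) * u := by
    have h1 : (1:ℝ) ≤ r := by exact_mod_cast (hr.trans' (Nat.le_add_left 1 r₀))
    have h2 : (1:ℝ) ≤ u := by exact_mod_cast hu
    nlinarith
  set A : ℝ := (C₂ * ((r:ℝ) * u)) ^ (r₀+1) with hA
  set F : ℝ := (r₀ ! : ℝ) with hF
  have hApos : 0 < A := by positivity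
  have hFpos : 0 < F := by rw [hF]; exact_mod_cast r₀.factorial_pos
  refine ⟨((r:ℝ)+1) * ((M0+1) * A / (F * (C₁*u)^r)), by positivity, ?_⟩
  intro n δ hδ t ht hdes k hk
  set v : Fin (r+1) → ℝ := fun i => t (k + i.val * u) with hv
  -- basic node estimates
  have hnn : ∀ i : Fin (r+1), k + i.val * u ≤ n := by
    intro i
    have : i.val * u ≤ r * u := Nat.mul_le_mul_right u (Nat.lt_succ_iff.mp i.isLt)
    omega
  have gap : ∀ i j : Fin (r+1), i.val < j.val →
      C₁ * ((j.val - i.val : ℕ) * u : ℕ) * δ ≤ v j - v i := by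
    intro i j hij
    have hsum : k + i.val * u + (j.val - i.val) * u = k + j.val * u := by
      rw [add_assoc, ← Nat.add_mul, Nat.add_sub_cancel' hij.le]
    have := (hdes (k + i.val * u) ((j.val - i.val) * u) (by rw [hsum]; exact hnn j)).1
    rw [hsum] at this
    exact this
  have gap2 : ∀ i j : Fin (r+1), i.val < j.val → C₁ * u * δ ≤ v j - v i := by
    intro i j hij
    refine le_trans ?_ (gap i j hij)
    have h1 : (u:ℝ) ≤ ((j.val - i.val) * u : ℕ) := by
      have : 1 * u ≤ (j.val - i.val) * u := Nat.mul_le_mul_right u (by omega)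
      exact_mod_cast (by simpa using this)
    have : C₁ * (u:ℝ) ≤ C₁ * ((j.val - i.val) * u : ℕ) := by
      exact mul_le_mul_of_nonneg_left h1 hC₁.le
    nlinarith
  have hinj : Set.InjOn v (Finset.univ : Finset (Fin (r+1))) := by
    intro i _ j _ hij
    by_contra hne
    rcases lt_trichotomy i.val j.val with h | h | h
    · have := gap2 i j h; have hpos : 0 < C₁ * u * δ := by positivity
      rw [hij] at this; linarith
    · exact hne (Fin.ext h)
    · have := gap2 j i h; have hpos : 0 < C₁ * u * δ := by positivity
      rw [hij] at this; linarith
  have sep : ∀ i : Fin (r+1), ∀ m ∈ Finset.univ.erase i, C₁ * u * δ ≤ |v i - v m| := by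
    intro i m hm
    have hne : m ≠ i := (Finset.mem_erase.mp hm).1
    have hpos : (0:ℝ) < C₁ * u * δ := by positivity
    rcases lt_trichotomy m.val i.val with h | h | h
    · have := gap2 m i h; rw [abs_of_nonneg (by linarith)]; linarith
    · exact absurd (Fin.ext h) hne
    · have := gap2 i m h; rw [abs_of_nonpos (by linarith)]; linarith
  have prodlb : ∀ i : Fin (r+1),
      (C₁ * u * δ)^r ≤ |∏ m ∈ Finset.univ.erase i, (v i - v m)| := by
    intro i
    rw [Finset.abs_prod]
    calc (C₁ * u * δ)^r = ∏ _m ∈ Finset.univ.erase i, (C₁ * u * δ) := by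
          rw [Finset.prod_const, Finset.card_erase_of_mem (Finset.mem_univ i), Finset.card_univ,
            Fintype.card_fin]; simp
      _ ≤ ∏ m ∈ Finset.univ.erase i, |v i - v m| :=
          Finset.prod_le_prod (fun m _ => by positivity) (fun m hm => sep i m hm)
  -- the interval [a,b]
  set a : ℝ := t k with ha
  set b : ℝ := t (k + r * u) with hb
  have hab : a < b := by
    have := (hdes k (r*u) hk).1
    have h1 : 0 < C₁ * ((r*u : ℕ):ℝ) * δ := by
      have : (0:ℝ) < ((r*u : ℕ):ℝ) := by push_cast; nlinarith
      positivity
    linarith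
  have hsub : Set.Icc a b ⊆ Set.Icc 0 T :=
    Set.Icc_subset_Icc (ht k (by omega)).1 (ht (k + r*u) hk).2
  have hmem : ∀ i : Fin (r+1), v i ∈ Set.Icc a b := by
    intro i
    constructor
    · rcases Nat.eq_zero_or_pos i.val with h0 | h0
      · simp [hv, ha, h0]
      · have := gap ⟨0, by omega⟩ i h0
        have h1 : (0:ℝ) ≤ C₁ * ((i.val - 0) * u : ℕ) * δ := by positivity
        have hv0 : v ⟨0, by omega⟩ = a := by simp [hv, ha]
        rw [hv0] at this; linarith
    · rcases Nat.lt_or_ge i.val r with h0 | h0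
      · have := gap i ⟨r, by omega⟩ h0
        have h1 : (0:ℝ) ≤ C₁ * ((r - i.val) * u : ℕ) * δ := by positivity
        have hvr : v ⟨r, by omega⟩ = b := by simp [hv, hb]
        rw [hvr] at this; linarith
      · have : i.val = r := by omega
        simp [hv, hb, this]
  have hup : ∀ i : Fin (r+1), v i - a ≤ C₂ * ((r:ℝ)*u) * δ := by
    intro i
    have := (hdes k (i.val * u) (hnn i)).2
    have h2 : ((i.val * u : ℕ):ℝ) ≤ (r:ℝ) * u := by
      push_cast
      have : (i.val:ℝ) ≤ r := by exact_mod_cast Nat.lt_succ_iff.mp i.isLt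
      nlinarith [show (0:ℝ) ≤ (u:ℝ) by positivity]
    have h3 : C₂ * ((i.val * u : ℕ):ℝ) * δ ≤ C₂ * ((r:ℝ)*u) * δ :=
      mul_le_mul_of_nonneg_right (mul_le_mul_of_nonneg_left h2 hC₂pos.le) hδ.le
    exact le_trans this h3
  -- smoothness on [a,b]
  have hμab : ContDiffOn ℝ ((r₀:ℕ∞) + 1) μ (Set.Icc a b) := by
    have := hμ.mono hsub
    have hcast : ((r₀ + 1 : ℕ) : ℕ∞) = (r₀:ℕ∞) + 1 := by push_cast; rfl
    rwa [hcast] at this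
  have hMab : ∀ y ∈ Set.Icc a b, ‖iteratedDerivWithin (r₀+1) μ (Set.Icc a b) y‖ ≤ M0 := by
    intro y hy
    rw [iterDeriv_sub hT hμ hab hsub le_rfl hy]
    exact hM0 y (hsub hy)
  have htay : ∀ i : Fin (r+1),
      ‖μ (v i) - taylorWithinEval μ r₀ (Set.Icc a b) a (v i)‖ ≤
        M0 * (C₂ * ((r:ℝ)*u) * δ)^(r₀+1) / r₀ ! := by
    intro i
    have h := taylor_mean_remainder_bound hab.le hμab (hmem i) hMab
    refine le_trans h ?_
    have h1 : 0 ≤ v i - a := by linarith [(hmem i).1]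
    have h2 : (v i - a)^(r₀+1) ≤ (C₂ * ((r:ℝ)*u) * δ)^(r₀+1) :=
      pow_le_pow_left₀ h1 (hup i) _
    gcongr
  -- the Taylor polynomial as a genuine polynomial
  set q : Polynomial ℝ := ∑ p ∈ Finset.range (r₀+1),
      Polynomial.C ((p ! : ℝ)⁻¹ * iteratedDerivWithin p μ (Set.Icc a b) a) *
        (Polynomial.X - Polynomial.C a)^p with hq
  have heval : ∀ x : ℝ, q.eval x = taylorWithinEval μ r₀ (Set.Icc a b) a x := by
    intro x
    rw [taylor_within_apply, hq, Polynomial.eval_finset_sum]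
    refine Finset.sum_congr rfl fun p _ => ?_
    simp [smul_eq_mul]
    ring
  have hqdeg : q.natDegree ≤ r₀ := by
    refine Polynomial.natDegree_sum_le_of_forall_le _ _ fun p hp => ?_
    refine le_trans (Polynomial.natDegree_C_mul_le _ _) ?_
    refine le_trans (Polynomial.natDegree_pow_le) ?_
    rw [Polynomial.natDegree_X_sub_C]
    simpa using Nat.lt_succ_iff.mp (Finset.mem_range.mp hp)
  have hcoeff0 : q.coeff r = 0 :=
    Polynomial.coeff_eq_zero_of_natDegree_lt (lt_of_le_of_lt hqdeg (by omega))
  have hzero : ∑ i : Fin (r+1), q.eval (v i) *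
      (∏ m ∈ Finset.univ.erase i, (v i - v m))⁻¹ = 0 := by
    have hdeg : q.degree < (#(Finset.univ : Finset (Fin (r+1))) : ℕ) := by
      refine lt_of_le_of_lt Polynomial.degree_le_natDegree ?_
      rw [Finset.card_univ, Fintype.card_fin]
      exact_mod_cast lt_of_le_of_lt hqdeg (by omega)
    have hq2 : Lagrange.interpolate Finset.univ v (fun i => q.eval (v i)) = q :=
      (Lagrange.eq_interpolate hinj hdeg).symm
    calc ∑ i : Fin (r+1), q.eval (v i) * (∏ m ∈ Finset.univ.erase i, (v i - v m))⁻¹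
        = (Lagrange.interpolate Finset.univ v (fun i => q.eval (v i))).coeff r :=
          (coeff_top_interpolate v hinj _).symm
      _ = q.coeff r := by rw [hq2]
      _ = 0 := hcoeff0
  -- decompose the sum
  have hsplit : ∑ i : Fin (r+1), μ (v i) / ∏ m ∈ Finset.univ.erase i, (v i - v m) =
      ∑ i : Fin (r+1), (μ (v i) - q.eval (v i)) *
        (∏ m ∈ Finset.univ.erase i, (v i - v m))⁻¹ := by
    have e : ∀ i : Fin (r+1), μ (v i) / ∏ m ∈ Finset.univ.erase i, (v i - v m) =
        (μ (v i) - q.eval (v i)) * (∏ m ∈ Finset.univ.erase i, (v i - v m))⁻¹ +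
          q.eval (v i) * (∏ m ∈ Finset.univ.erase i, (v i - v m))⁻¹ := by
      intro i; rw [div_eq_mul_inv]; ring
    rw [Finset.sum_congr rfl (fun i _ => e i), Finset.sum_add_distrib, hzero, add_zero]
  -- per-term bound
  have hterm : ∀ i : Fin (r+1),
      |(μ (v i) - q.eval (v i)) * (∏ m ∈ Finset.univ.erase i, (v i - v m))⁻¹| ≤
        (M0 * (C₂ * ((r:ℝ)*u) * δ)^(r₀+1) / r₀ !) * ((C₁ * u * δ)^r)⁻¹ := by
    intro i
    rw [abs_mul, abs_inv]
    have h1 : |μ (v i) - q.eval (v i)| ≤ M0 * (C₂ * ((r:ℝ)*u) * δ)^(r₀+1) / r₀ ! := by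
      rw [heval]
      exact htay i
    have hppos : (0:ℝ) < (C₁ * u * δ)^r := by positivity
    have h2 : |∏ m ∈ Finset.univ.erase i, (v i - v m)|⁻¹ ≤ ((C₁ * u * δ)^r)⁻¹ :=
      inv_anti₀ hppos (prodlb i)
    have h1nn : (0:ℝ) ≤ |μ (v i) - q.eval (v i)| := abs_nonneg _
    have h2nn : (0:ℝ) ≤ |∏ m ∈ Finset.univ.erase i, (v i - v m)|⁻¹ := by positivity
    exact mul_le_mul h1 h2 h2nn (by positivity)
  -- sum up
  have hsum : |∑ i : Fin (r+1), μ (v i) / ∏ m ∈ Finset.univ.erase i, (v i - v m)| ≤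
      ((r:ℝ)+1) * ((M0 * (C₂ * ((r:ℝ)*u) * δ)^(r₀+1) / r₀ !) * ((C₁ * u * δ)^r)⁻¹) := by
    rw [hsplit]
    refine le_trans (Finset.abs_sum_le_sum_abs _ _) ?_
    refine le_trans (Finset.sum_le_sum fun i _ => hterm i) ?_
    rw [Finset.sum_const, Finset.card_univ, Fintype.card_fin, nsmul_eq_mul]
    push_cast
    exact le_refl _
  -- conclude
  refine le_trans hsum ?_
  have hδne : δ ≠ 0 := ne_of_gt hδ
  have hpows : δ ^ (r - (r₀+1)) = δ ^ r / δ ^ (r₀+1) := pow_sub₀ δ hδne hr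
  rw [hpows, div_div_eq_mul_div]
  have e1 : (C₂ * ((r:ℝ)*u) * δ)^(r₀+1) = A * δ^(r₀+1) := by rw [hA, ← mul_pow]
  have e2 : (C₁ * (u:ℝ) * δ)^r = (C₁*(u:ℝ))^r * δ^r := by rw [mul_pow]
  rw [e1, e2]
  have hBpos : (0:ℝ) < (C₁*(u:ℝ))^r := by positivity
  have hδrpos : (0:ℝ) < δ^r := by positivity
  have hδppos : (0:ℝ) < δ^(r₀+1) := by positivity
  set G : ℝ := ((r:ℝ)+1) * A / (F * (C₁*(u:ℝ))^r) * (δ^(r₀+1)/δ^r) with hG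
  have hGnn : (0:ℝ) ≤ G := by rw [hG]; positivity
  have eL : ((r:ℝ)+1) * (M0 * (A * δ^(r₀+1)) / F * (((C₁*(u:ℝ))^r * δ^r))⁻¹) = M0 * G := by
    rw [hG]; simp only [div_eq_mul_inv, mul_inv]; ring
  have eR : ((r:ℝ)+1) * ((M0+1) * A / (F * (C₁*(u:ℝ))^r)) * δ^(r₀+1) / δ^r = (M0+1) * G := by
    rw [hG]; simp only [div_eq_mul_inv, mul_inv]; ring
  rw [eL, eR]
  nlinarith
end

section
/- Let X be a centered Gaussian process on [0,T] whose covariance K satisfies the Hölder-type increment bound E(X(s) − X(t))² ≤ M |s − t|^{2β} for all s,t ∈ [0,T], with β ∈ (0,1). Let X̃_r be the piecewise Lagrange interpolation of order r on nodes satisfying C₁ j δ ≤ t_{kr+j} − t_{kr} ≤ C₂ j δ. Then sup_{t ∈ I_k} E(X(t) − X̃_r(t))² ≤ M ((r+1)(C₂ r/C₁)^r)² (C₂ r δ)^{2β}; in particular the uniform mean-square interpolation error is O(δ^{2β}). -/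
open MeasureTheory Finset

private lemma lp_coeFn_sum {α ι : Type*} [DecidableEq ι] [MeasurableSpace α] {μ : Measure α}
    (s : Finset ι) (f : ι → Lp ℝ 2 μ) :
    ⇑(∑ i ∈ s, f i) =ᵐ[μ] fun a => ∑ i ∈ s, f i a := by
  induction s using Finset.induction_on with
  | empty => simp only [Finset.sum_empty]; exact Lp.coeFn_zero ℝ 2 μ
  | @insert a s ha ih =>
    rw [Finset.sum_insert ha]
    filter_upwards [Lp.coeFn_add (f a) (∑ i ∈ s, f i), ih] with ω h1 h2
    rw [h1, Pi.add_apply, h2, Finset.sum_insert ha]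

private lemma lp_norm_sq {α : Type*} [MeasurableSpace α] {μ : Measure α} (f : Lp ℝ 2 μ) :
    ‖f‖ ^ 2 = ∫ a, f a * f a ∂μ := by
  rw [← real_inner_self_eq_norm_sq, MeasureTheory.L2.inner_def]
  simp [RCLike.inner_apply]
  simp only [sq]

/-- Mean-square Lagrange interpolation error bound under a Hölder increment
condition: `sup_{t ∈ I_k} E(X(t) − X̃_r(t))² ≤ M ((r+1)(C₂ r/C₁)^r)² (C₂ r δ)^{2β}`. -/
theorem stmt_18 {Ω : Type*} [MeasurableSpace Ω] (P : Measure Ω) [IsProbabilityMeasure P]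
    (X : ℝ → Ω → ℝ)
    (hL2 : ∀ t : ℝ, MemLp (X t) 2 P)
    (M β : ℝ) (hM : 0 ≤ M) (hβ : β ∈ Set.Ioo (0 : ℝ) 1)
    (hHolder : ∀ s u : ℝ, ∫ ω, (X s ω - X u ω) ^ 2 ∂P ≤ M * |s - u| ^ (2 * β))
    (r : ℕ) (hr : 1 ≤ r) (δ C₁ C₂ : ℝ) (hδ : 0 < δ) (hC₁ : 0 < C₁) (hC₁₂ : C₁ ≤ C₂)
    (x : Fin (r + 1) → ℝ)
    (hsp : ∀ i j : Fin (r + 1), i ≤ j →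
      C₁ * ((j.val - i.val : ℕ) : ℝ) * δ ≤ x j - x i ∧
      x j - x i ≤ C₂ * ((j.val - i.val : ℕ) : ℝ) * δ) :
    ∀ t ∈ Set.Icc (x 0) (x (Fin.last r)),
      ∫ ω, (X t ω -
          ∑ i, (∏ j ∈ Finset.univ.erase i, (t - x j) / (x i - x j)) * X (x i) ω) ^ 2 ∂P ≤
        M * ((r + 1 : ℝ) * (C₂ * r / C₁) ^ r) ^ 2 * (C₂ * r * δ) ^ (2 * β) := by
  obtain ⟨hβ0, hβ1⟩ := hβ
  intro t ht
  have hC₂ : 0 < C₂ := lt_of_lt_of_le hC₁ hC₁₂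
  have hr' : (1 : ℝ) ≤ (r : ℝ) := by exact_mod_cast hr
  set c : Fin (r + 1) → ℝ := fun i => ∏ j ∈ Finset.univ.erase i, (t - x j) / (x i - x j)
    with hc
  -- strict monotonicity of nodes
  have hmono : StrictMono x := by
    intro i j hij
    have h1 := (hsp i j hij.le).1
    have h2 : (0 : ℝ) < ((j.val - i.val : ℕ) : ℝ) := by
      have : 0 < j.val - i.val := Nat.sub_pos_of_lt hij
      exact_mod_cast this
    have h3 : 0 < C₁ * ((j.val - i.val : ℕ) : ℝ) * δ := by positivity
    linarith
  have hinj : Set.InjOn x (Finset.univ : Finset (Fin (r + 1))) :=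
    fun a _ b _ h => hmono.injective h
  -- Lagrange basis sums to 1
  have hsum1 : ∑ i, c i = 1 := by
    have h := Lagrange.sum_basis hinj ⟨0, Finset.mem_univ 0⟩
    have h2 := congrArg (Polynomial.eval t) h
    rw [Polynomial.eval_finset_sum] at h2
    simp only [Lagrange.basis, Polynomial.eval_prod, Lagrange.basisDivisor, Polynomial.eval_mul,
      Polynomial.eval_C, Polynomial.eval_sub, Polynomial.eval_X, Polynomial.eval_one] at h2
    rw [hc]
    convert h2 using 2 with i
    refine Finset.prod_congr rfl fun j _ => ?_
    rw [div_eq_inv_mul]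
  set A : ℝ := C₂ * r * δ with hA
  have hA0 : 0 < A := by positivity
  -- interval bound: all nodes and t lie in [x 0, x last], of length ≤ A
  have hlen : x (Fin.last r) - x 0 ≤ A := by
    have := (hsp 0 (Fin.last r) (Fin.zero_le _)).2
    simpa [Fin.last, hA] using this
  have hnode : ∀ j : Fin (r + 1), x 0 ≤ x j ∧ x j ≤ x (Fin.last r) := by
    intro j
    exact ⟨hmono.monotone (Fin.zero_le _), hmono.monotone (Fin.le_last _)⟩
  have htA : ∀ j : Fin (r + 1), |t - x j| ≤ A := by
    intro j
    have h1 := (hnode j).1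
    have h2 := (hnode j).2
    rw [abs_le]
    constructor <;> [nlinarith [ht.1, ht.2]; nlinarith [ht.1, ht.2]]
  -- separation: |x i - x j| ≥ C₁ δ for i ≠ j
  have hsep : ∀ i j : Fin (r + 1), i ≠ j → C₁ * δ ≤ |x i - x j| := by
    intro i j hij
    rcases lt_or_gt_of_ne hij with h | h
    · have h1 := (hsp i j h.le).1
      have h2 : (1 : ℝ) ≤ ((j.val - i.val : ℕ) : ℝ) := by
        have : 1 ≤ j.val - i.val := Nat.sub_pos_of_lt h
        exact_mod_cast this
      have h3 : C₁ * δ ≤ C₁ * ((j.val - i.val : ℕ) : ℝ) * δ := by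
        nlinarith [mul_pos hC₁ hδ]
      have h4 : 0 < C₁ * δ := mul_pos hC₁ hδ
      rw [abs_sub_comm, abs_of_nonneg (by linarith)]
      linarith
    · have h1 := (hsp j i h.le).1
      have h2 : (1 : ℝ) ≤ ((i.val - j.val : ℕ) : ℝ) := by
        have : 1 ≤ i.val - j.val := Nat.sub_pos_of_lt h
        exact_mod_cast this
      have h3 : C₁ * δ ≤ C₁ * ((i.val - j.val : ℕ) : ℝ) * δ := by
        nlinarith [mul_pos hC₁ hδ]
      have h4 : 0 < C₁ * δ := mul_pos hC₁ hδ
      rw [abs_of_nonneg (by linarith)]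
      linarith
  -- bound on Lagrange coefficients
  set B : ℝ := C₂ * r / C₁ with hB
  have hB0 : 0 ≤ B := by positivity
  have hcb : ∀ i : Fin (r + 1), |c i| ≤ B ^ r := by
    intro i
    rw [hc]
    calc |∏ j ∈ Finset.univ.erase i, (t - x j) / (x i - x j)|
        = ∏ j ∈ Finset.univ.erase i, |t - x j| / |x i - x j| := by
          rw [Finset.abs_prod]
          exact Finset.prod_congr rfl fun j _ => abs_div _ _
      _ ≤ ∏ _j ∈ Finset.univ.erase i, B := by
          refine Finset.prod_le_prod (fun j _ => by positivity) fun j hj => ?_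
          have hji : i ≠ j := fun h => (Finset.mem_erase.mp hj).1 h.symm
          have h1 := htA j
          have h2 := hsep i j hji
          rw [div_le_iff₀ (lt_of_lt_of_le (by positivity) h2)]
          have : B * (C₁ * δ) = A := by
            field_simp [hB, hA]
            rw [hB, hA]; field_simp
          calc |t - x j| ≤ A := h1
            _ = B * (C₁ * δ) := this.symm
            _ ≤ B * |x i - x j| := by
                apply mul_le_mul_of_nonneg_left h2 hB0
      _ = B ^ r := by
          rw [Finset.prod_const, Finset.card_erase_of_mem (Finset.mem_univ i)]
          simp
  -- L² machinery
  have hmem : ∀ i : Fin (r + 1), MemLp (fun ω => X t ω - X (x i) ω) 2 P :=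
    fun i => (hL2 t).sub (hL2 (x i))
  set g : Fin (r + 1) → Lp ℝ 2 P := fun i => (hmem i).toLp _ with hg
  have hKi : ∀ i : Fin (r + 1), ∫ ω, (X t ω - X (x i) ω) ^ 2 ∂P ≤ M * A ^ (2 * β) := by
    intro i
    refine (hHolder t (x i)).trans ?_
    have := Real.rpow_le_rpow (abs_nonneg (t - x i)) (htA i) (by positivity : (0:ℝ) ≤ 2 * β)
    exact mul_le_mul_of_nonneg_left this hM
  have hMA : 0 ≤ M * A ^ (2 * β) := by positivity
  have hgnorm : ∀ i : Fin (r + 1), ‖g i‖ ≤ Real.sqrt (M * A ^ (2 * β)) := by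
    intro i
    have h1 : ‖g i‖ ^ 2 = ∫ ω, (X t ω - X (x i) ω) ^ 2 ∂P := by
      rw [lp_norm_sq]
      refine integral_congr_ae ?_
      filter_upwards [(hmem i).coeFn_toLp] with ω hω
      rw [hg]
      simp only [hω]
      ring
    have h2 : ‖g i‖ ^ 2 ≤ M * A ^ (2 * β) := h1 ▸ hKi i
    calc ‖g i‖ = Real.sqrt (‖g i‖ ^ 2) := (Real.sqrt_sq (norm_nonneg _)).symm
      _ ≤ Real.sqrt (M * A ^ (2 * β)) := Real.sqrt_le_sqrt h2
  set G : Lp ℝ 2 P := ∑ i, c i • g i with hG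
  have hGcoe : ⇑G =ᵐ[P] fun ω => ∑ i, c i * (X t ω - X (x i) ω) := by
    have h1 := lp_coeFn_sum Finset.univ (fun i => c i • g i)
    refine h1.trans ?_
    have h3 : ∀ i : Fin (r + 1), ⇑(c i • g i) =ᵐ[P] fun ω => c i * (X t ω - X (x i) ω) := by
      intro i
      filter_upwards [Lp.coeFn_smul (c i) (g i), (hmem i).coeFn_toLp] with ω hω1 hω2
      rw [hω1]
      simp [hg, hω2]
    filter_upwards [ae_all_iff.mpr h3] with ω hω
    exact Finset.sum_congr rfl fun i _ => hω i
  have hEq : ∫ ω, (X t ω - ∑ i, c i * X (x i) ω) ^ 2 ∂P = ‖G‖ ^ 2 := by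
    rw [lp_norm_sq]
    refine integral_congr_ae ?_
    filter_upwards [hGcoe] with ω hω
    rw [hω]
    have h4 : ∑ i, c i * (X t ω - X (x i) ω) = X t ω - ∑ i, c i * X (x i) ω := by
      simp only [mul_sub, Finset.sum_sub_distrib, ← Finset.sum_mul, hsum1, one_mul]
    rw [h4]
    ring
  have hGle : ‖G‖ ≤ ((r : ℝ) + 1) * B ^ r * Real.sqrt (M * A ^ (2 * β)) := by
    calc ‖G‖ ≤ ∑ i, ‖c i • g i‖ := norm_sum_le _ _
      _ ≤ ∑ _i : Fin (r + 1), B ^ r * Real.sqrt (M * A ^ (2 * β)) := by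
          refine Finset.sum_le_sum fun i _ => ?_
          rw [norm_smul, Real.norm_eq_abs]
          exact mul_le_mul (hcb i) (hgnorm i) (norm_nonneg _) (by positivity)
      _ = ((r : ℝ) + 1) * B ^ r * Real.sqrt (M * A ^ (2 * β)) := by
          rw [Finset.sum_const, Finset.card_univ, Fintype.card_fin]
          push_cast
          ring
  have hfinal : ‖G‖ ^ 2 ≤ M * (((r : ℝ) + 1) * B ^ r) ^ 2 * A ^ (2 * β) := by
    have h5 : ‖G‖ ^ 2 ≤ (((r : ℝ) + 1) * B ^ r * Real.sqrt (M * A ^ (2 * β))) ^ 2 :=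
      pow_le_pow_left₀ (norm_nonneg _) hGle 2
    calc ‖G‖ ^ 2 ≤ (((r : ℝ) + 1) * B ^ r * Real.sqrt (M * A ^ (2 * β))) ^ 2 := h5
      _ = (((r : ℝ) + 1) * B ^ r) ^ 2 * Real.sqrt (M * A ^ (2 * β)) ^ 2 := by ring
      _ = M * (((r : ℝ) + 1) * B ^ r) ^ 2 * A ^ (2 * β) := by
          rw [Real.sq_sqrt hMA]
          ring
  calc ∫ ω, (X t ω - ∑ i, c i * X (x i) ω) ^ 2 ∂P = ‖G‖ ^ 2 := hEq
    _ ≤ M * (((r : ℝ) + 1) * B ^ r) ^ 2 * A ^ (2 * β) := hfinal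
end
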